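/- Let n ∈ ℕ, x, y ∈ [0,1] with x ≠ y, and g_n(x,z) = (1 − x + xz)^n. Write (g_n(x,z) − g_n(y,z))/(z − 1) = ∑_{k=0}^{n−1} β_{n,k}(x,y) z^k. Then sign(β_{n,k}(x,y)) = sign(x − y) for all 0 ≤ k ≤ n−1. -/

import Mathlib

open Polynomial Finset

lemma coeff_gen (a : ℝ) (n i : ℕ) (h : i ≤ n) :
    (((C (1 - a) + C a * X : ℝ[X]) ^ n)).coeff i
      = (n.choose i : ℝ) * a ^ i * (1 - a) ^ (n - i) := by
  rw [add_comm, add_pow, finset_sum_coeff]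
  have hterm : ∀ m, ((C a * X) ^ m * (C (1 - a)) ^ (n - m) * (n.choose m : ℝ[X]))
      = C ((n.choose m : ℝ) * a ^ m * (1 - a) ^ (n - m)) * X ^ m := by
    intro m
    simp only [mul_pow, C_pow, C_mul, ← C_eq_natCast]
    ring
  rw [Finset.sum_eq_single i]
  · rw [hterm, coeff_C_mul, coeff_X_pow, if_pos rfl, mul_one]
  · intro b _ hb
    rw [hterm, coeff_C_mul, coeff_X_pow, if_neg (Ne.symm hb), mul_zero]
  · intro hi
    exact absurd (Finset.mem_range.2 (Nat.lt_succ_of_le h)) hi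

noncomputable def binCDF (n k : ℕ) (t : ℝ) : ℝ :=
  ∑ i ∈ Finset.range (k + 1), (n.choose i : ℝ) * t ^ i * (1 - t) ^ (n - i)

lemma binCDF_hasDerivAt (n k : ℕ) (hk : k < n) (t : ℝ) :
    HasDerivAt (binCDF n k)
      (-((n : ℝ) * ((n - 1).choose k : ℝ) * t ^ k * (1 - t) ^ (n - 1 - k))) t := by
  have hn : 1 ≤ n := Nat.one_le_of_lt (Nat.lt_of_le_of_lt (Nat.zero_le k) hk) |>.trans (le_refl n)
  set a : ℕ → ℝ := fun i => (n : ℝ) * (((n - 1).choose i : ℕ) : ℝ) * t ^ i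
      * (1 - t) ^ (n - 1 - i) with ha
  have hone : HasDerivAt (fun s : ℝ => (1 - s)) (-1) t := by
    simpa using (hasDerivAt_id t).const_sub 1
  have h0 : HasDerivAt (fun s : ℝ => (1 - s) ^ n) (-(a 0)) t := by
    have := hone.fun_pow n
    refine this.congr_deriv (Eq.symm ?_)
    simp [ha]
  have hterm : ∀ j, j < k → HasDerivAt
      (fun s : ℝ => (n.choose (j + 1) : ℝ) * s ^ (j + 1) * (1 - s) ^ (n - (j + 1)))
      (a j - a (j + 1)) t := by
    intro j hj
    have hjn : j + 1 < n := Nat.lt_of_le_of_lt hj hk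
    have h1 : HasDerivAt (fun s : ℝ => s ^ (j + 1)) (((j : ℝ) + 1) * t ^ j) t := by
      simpa using hasDerivAt_pow (j + 1) t
    have h2 : HasDerivAt (fun s : ℝ => (1 - s) ^ (n - (j + 1)))
        (((n - (j + 1) : ℕ) : ℝ) * (1 - t) ^ (n - (j + 1) - 1) * (-1)) t := hone.pow _
    have hmul := (h1.const_mul (n.choose (j + 1) : ℝ)).fun_mul h2
    refine hmul.congr_deriv (Eq.symm ?_)
    have hsn : (n - 1).succ = n := by omega
    have hnatA : n.choose (j + 1) * (j + 1) = n * (n - 1).choose j := by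
      have := Nat.add_one_mul_choose_eq (n - 1) j
      rw [Nat.sub_add_cancel hn] at this
      omega
    have hnatB : n.choose (j + 1) * (n - 1 - j) = n * (n - 1).choose (j + 1) := by
      have h1' := Nat.choose_succ_right_eq n (j + 1)
      have h2' := Nat.add_one_mul_choose_eq (n - 1) (j + 1)
      rw [Nat.sub_add_cancel hn] at h2'
      have he : n - (j + 1) = n - 1 - j := by omega
      rw [he] at h1'
      omega
    have hA : ((n.choose (j + 1) : ℕ) : ℝ) * ((j : ℝ) + 1)
        = (n : ℝ) * (((n - 1).choose j : ℕ) : ℝ) := by exact_mod_cast hnatA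
    have hB : ((n.choose (j + 1) : ℕ) : ℝ) * ((n - 1 - j : ℕ) : ℝ)
        = (n : ℝ) * (((n - 1).choose (j + 1) : ℕ) : ℝ) := by exact_mod_cast hnatB
    rw [show n - (j + 1) - 1 = n - 1 - (j + 1) from by omega,
        show n - (j + 1) = n - 1 - j from by omega]
    simp only [ha]
    linear_combination (-(t ^ j * (1 - t) ^ (n - 1 - j))) * hA
      + (t ^ (j + 1) * (1 - t) ^ (n - 1 - (j + 1))) * hB
  have hsum : HasDerivAt
      (fun s : ℝ => (∑ j ∈ Finset.range k,
          (n.choose (j + 1) : ℝ) * s ^ (j + 1) * (1 - s) ^ (n - (j + 1))) + (1 - s) ^ n)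
      ((∑ j ∈ Finset.range k, (a j - a (j + 1))) + -(a 0)) t := by
    exact (HasDerivAt.fun_sum fun j hj => hterm j (Finset.mem_range.1 hj)).add h0
  convert hsum using 1
  · funext s
    rw [binCDF, Finset.sum_range_succ']
    simp
  · rw [Finset.sum_range_sub' (fun i => a i) k]
    ring

lemma binCDF_strictAntiOn (n k : ℕ) (hk : k < n) :
    StrictAntiOn (binCDF n k) (Set.Icc (0:ℝ) 1) := by
  apply strictAntiOn_of_deriv_neg (convex_Icc 0 1)
  · exact (Differentiable.continuous fun t =>
      (binCDF_hasDerivAt n k hk t).differentiableAt).continuousOn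
  · intro t ht
    rw [interior_Icc] at ht
    rw [(binCDF_hasDerivAt n k hk t).deriv]
    have h1 : (0:ℝ) < t := ht.1
    have h2 : (0:ℝ) < 1 - t := by linarith [ht.2]
    have hc : (0:ℝ) < (((n - 1).choose k : ℕ) : ℝ) := by
      exact_mod_cast Nat.choose_pos (by omega : k ≤ n - 1)
    have hn : (0:ℝ) < (n : ℝ) := by exact_mod_cast Nat.pos_of_ne_zero (by omega)
    nlinarith [mul_pos (mul_pos (mul_pos hn hc) (pow_pos h1 k)) (pow_pos h2 (n - 1 - k))]

theorem stmt13 (n : ℕ) (x y : ℝ) (hx : x ∈ Set.Icc (0:ℝ) 1) (hy : y ∈ Set.Icc (0:ℝ) 1)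
    (hxy : x ≠ y) (k : ℕ) (hk : k < n) :
    Real.sign ((((C (1 - x) + C x * X) ^ n - (C (1 - y) + C y * X) ^ n : Polynomial ℝ)
        /ₘ (X - C 1)).coeff k)
      = Real.sign (x - y) := by
  set p : ℝ[X] := (C (1 - x) + C x * X) ^ n - (C (1 - y) + C y * X) ^ n with hp
  have hroot : p.IsRoot 1 := by
    simp [hp, IsRoot, eval_pow]
  have hfac := (mul_divByMonic_eq_iff_isRoot (p := p) (a := 1)).2 hroot
  set q : ℝ[X] := p /ₘ (X - C 1) with hq
  have hstep : ∀ m : ℕ, p.coeff (m + 1) = q.coeff m - q.coeff (m + 1) := by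
    intro m
    have h1 := congrArg (fun r : ℝ[X] => r.coeff (m + 1)) hfac
    simp only [sub_mul, coeff_sub, coeff_X_mul, C_1, one_mul] at h1
    linarith [h1]
  have hcoeff : ∀ m : ℕ, q.coeff m = -∑ i ∈ Finset.range (m + 1), p.coeff i := by
    intro m
    induction m with
    | zero =>
      have h0 := congrArg (fun r : ℝ[X] => r.coeff 0) hfac
      simp only [sub_mul, coeff_sub, mul_coeff_zero, coeff_X_zero, C_1, one_mul,
        zero_mul] at h0
      simp [← h0]
    | succ m ih =>
      have h1 := hstep m
      rw [Finset.sum_range_succ, neg_add]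
      rw [← ih]
      linarith [h1]
  have hq2 : q.coeff k = binCDF n k y - binCDF n k x := by
    rw [hcoeff k, binCDF, binCDF, ← Finset.sum_sub_distrib]
    rw [← Finset.sum_neg_distrib]
    apply Finset.sum_congr rfl
    intro i hi
    have hin : i ≤ n := le_of_lt (lt_of_lt_of_le (Finset.mem_range.1 hi) hk)
    rw [hp, coeff_sub, coeff_gen x n i hin, coeff_gen y n i hin]
    ring
  have hanti := binCDF_strictAntiOn n k hk
  rcases hxy.lt_or_gt with h | h
  · have hlt := hanti hx hy h
    rw [hq2, Real.sign_of_neg (by linarith), Real.sign_of_neg (by linarith)]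
  · have hlt := hanti hy hx h
    rw [hq2, Real.sign_of_pos (by linarith), Real.sign_of_pos (by linarith)]
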